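/- If a Mealy automaton A = (Q, Σ, δ, ρ) is reversible and no connected component of A is coreversible, then for every n ≥ 1 every connected component of the power A^n, viewed as a Mealy automaton, is reversible and non-coreversible; if moreover A is invertible, then these connected components are also invertible. -/
import Mathlib


/-!
Mealy automata: common definitions.

A Mealy automaton on stateset `Q` and alphabet `Γ` is given by transition
functions `δ : Γ → Q → Q` (for each input letter) and output functions
`ρ : Q → Γ → Γ` (for each state); it has a transition `x —i|j→ y` exactly
when `δ i x = y` and `ρ x i = j`.
-/

/-- Extended output function `ρ_x : Γ* → Γ*` of a single state. -/
def rhoStar {Q Γ : Type*} (δ : Γ → Q → Q) (ρ : Q → Γ → Γ) : Q → List Γ → List Γ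
  | _, [] => []
  | x, i :: s => ρ x i :: rhoStar δ ρ (δ i x) s

/-- `ρ_u : Γ* → Γ*` for a word `u = x₁⋯x_n` of states: `ρ_u = ρ_{x_n} ∘ ⋯ ∘ ρ_{x₁}`. -/
def rhoWord {Q Γ : Type*} (δ : Γ → Q → Q) (ρ : Q → Γ → Γ) : List Q → List Γ → List Γ
  | [], s => s
  | x :: u, s => rhoWord δ ρ u (rhoStar δ ρ x s)

/-- `ρ_u : Γ → Γ` on single letters (the output function of the power automaton). -/
def rhoLetter {Q Γ : Type*} (ρ : Q → Γ → Γ) : List Q → Γ → Γ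
  | [], i => i
  | x :: u, i => rhoLetter ρ u (ρ x i)

/-- Extended transition function `δ_i : Q* → Q*` (the transition function of powers). -/
def deltaStar {Q Γ : Type*} (δ : Γ → Q → Q) (ρ : Q → Γ → Γ) : Γ → List Q → List Q
  | _, [] => []
  | i, x :: u => δ i x :: deltaStar δ ρ (ρ x i) u

/-- Sequential application `δ_s = δ_{s_n} ∘ ⋯ ∘ δ_{s₁}` of the letters of a word `s`. -/
def applyWord {S Γ : Type*} (d : Γ → S → S) : List Γ → S → S
  | [], x => x
  | i :: s, x => applyWord d s (d i x)

/-- The orbit `{δ_s(x) : s ∈ Γ*}` of a state: for reversible automata this is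
exactly the (strongly) connected component of `x`. -/
def orbitOf {S Γ : Type*} (d : Γ → S → S) (x : S) : Set S :=
  {y | ∃ s : List Γ, applyWord d s x = y}

/-- An automaton is invertible when every output function is a permutation. -/
def MInvertible {Q Γ : Type*} (ρ : Q → Γ → Γ) : Prop := ∀ x, Function.Bijective (ρ x)

/-- An automaton is reversible when every transition function is a permutation. -/
def MReversible {Q Γ : Type*} (δ : Γ → Q → Q) : Prop := ∀ i, Function.Bijective (δ i)

/-- Coreversibility: `δ_i(y) = δ_{i'}(z)` and `ρ_y(i) = ρ_z(i')` imply `y = z`. -/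
def MCoreversible {Q Γ : Type*} (δ : Γ → Q → Q) (ρ : Q → Γ → Γ) : Prop :=
  ∀ y z : Q, ∀ i i' : Γ, δ i y = δ i' z → ρ y i = ρ z i' → y = z

/-- Bireversible: invertible, reversible and coreversible. -/
def MBireversible {Q Γ : Type*} (δ : Γ → Q → Q) (ρ : Q → Γ → Γ) : Prop :=
  MInvertible ρ ∧ MReversible δ ∧ MCoreversible δ ρ

/-- Connectedness: every state is reachable from every state. -/
def MConnected {Q Γ : Type*} (δ : Γ → Q → Q) : Prop :=
  ∀ x y : Q, ∃ s : List Γ, applyWord δ s x = y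

/-- Invertibility of a component `C` (as an automaton with stateset `C`). -/
def CompInvertible {S Γ : Type*} (r : S → Γ → Γ) (C : Set S) : Prop :=
  ∀ x ∈ C, Function.Bijective (r x)

/-- Reversibility of a component `C`: each transition function permutes `C`. -/
def CompReversible {S Γ : Type*} (d : Γ → S → S) (C : Set S) : Prop :=
  ∀ i : Γ, Set.BijOn (d i) C C

/-- Coreversibility of a component `C` (as an automaton with stateset `C`). -/
def CompCoreversible {S Γ : Type*} (d : Γ → S → S) (r : S → Γ → Γ) (C : Set S) : Prop :=
  ∀ y ∈ C, ∀ z ∈ C, ∀ i i' : Γ, d i y = d i' z → r y i = r z i' → y = z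

/-- Bireversibility of a component `C` (as an automaton with stateset `C`). -/
def CompBireversible {S Γ : Type*} (d : Γ → S → S) (r : S → Γ → Γ) (C : Set S) : Prop :=
  CompInvertible r C ∧ CompReversible d C ∧ CompCoreversible d r C

/-- Transition functions of the product `A × B` of two Mealy automata. -/
def prodD {Q Q' Γ : Type*} (δ : Γ → Q → Q) (ρ : Q → Γ → Γ) (δ' : Γ → Q' → Q') :
    Γ → Q × Q' → Q × Q' :=
  fun i p => (δ i p.1, δ' (ρ p.1 i) p.2)

/-- Output functions of the product `A × B` of two Mealy automata. -/
def prodR {Q Q' Γ : Type*} (ρ : Q → Γ → Γ) (ρ' : Q' → Γ → Γ) : Q × Q' → Γ → Γ :=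
  fun p i => ρ' p.2 (ρ p.1 i)

/-- `u^n`: the `n`-fold concatenation of a word with itself. -/
def wordPow {Q : Type*} (u : List Q) : ℕ → List Q
  | 0 => []
  | n + 1 => u ++ wordPow u n


section Aux

variable {Q Γ : Type*}

lemma applyWord_append {S Γ : Type*} (d : Γ → S → S) (s t : List Γ) (x : S) :
    applyWord d (s ++ t) x = applyWord d t (applyWord d s x) := by
  induction s generalizing x with
  | nil => rfl
  | cons i s ih => simp [applyWord, ih]

lemma mem_orbit_self {S Γ : Type*} (d : Γ → S → S) (x : S) : x ∈ orbitOf d x :=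
  ⟨[], rfl⟩

lemma orbit_mapsTo {S Γ : Type*} (d : Γ → S → S) (x : S) (i : Γ) :
    Set.MapsTo (d i) (orbitOf d x) (orbitOf d x) := by
  rintro y ⟨s, rfl⟩
  exact ⟨s ++ [i], by rw [applyWord_append]; rfl⟩

lemma deltaStar_length (δ : Γ → Q → Q) (ρ : Q → Γ → Γ) (i : Γ) (l : List Q) :
    (deltaStar δ ρ i l).length = l.length := by
  induction l generalizing i with
  | nil => rfl
  | cons x l ih => simp [deltaStar, ih]

lemma applyWord_deltaStar_length (δ : Γ → Q → Q) (ρ : Q → Γ → Γ) (s : List Γ) (u : List Q) :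
    (applyWord (deltaStar δ ρ) s u).length = u.length := by
  induction s generalizing u with
  | nil => rfl
  | cons i s ih => simpa [applyWord] using (ih _).trans (deltaStar_length δ ρ i u)

lemma orbit_finite (δ : Γ → Q → Q) (ρ : Q → Γ → Γ) [Finite Q] (u : List Q) :
    (orbitOf (deltaStar δ ρ) u).Finite := by
  apply (List.finite_length_eq Q u.length).subset
  rintro y ⟨s, rfl⟩
  exact applyWord_deltaStar_length δ ρ s u

lemma deltaStar_injective {δ : Γ → Q → Q} {ρ : Q → Γ → Γ} (hRev : MReversible δ) (i : Γ) :
    Function.Injective (deltaStar δ ρ i) := by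
  have main : ∀ (l : List Q) (j : Γ) (l' : List Q),
      deltaStar δ ρ j l = deltaStar δ ρ j l' → l = l' := by
    intro l
    induction l with
    | nil =>
      intro j l' h
      cases l' with
      | nil => rfl
      | cons x l' => simp [deltaStar] at h
    | cons x l ih =>
      intro j l' h
      cases l' with
      | nil => simp [deltaStar] at h
      | cons x' l' =>
        simp only [deltaStar, List.cons.injEq] at h
        obtain ⟨h1, h2⟩ := h
        have hx : x = x' := (hRev j).injective h1
        subst hx
        exact congrArg (List.cons x) (ih _ _ h2)
  exact fun a b => main a i b

lemma orbit_compReversible {δ : Γ → Q → Q} {ρ : Q → Γ → Γ} [Finite Q]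
    (hRev : MReversible δ) (u : List Q) :
    CompReversible (deltaStar δ ρ) (orbitOf (deltaStar δ ρ) u) := by
  intro i
  exact ((orbit_finite δ ρ u).injOn_iff_bijOn_of_mapsTo
    (orbit_mapsTo _ u i)).mp ((deltaStar_injective hRev i).injOn)

lemma orbit_cons_of_rel {δ : Γ → Q → Q} {ρ : Q → Γ → Γ} [Finite Q]
    (hRev : MReversible δ) (u : List Q) {y z : Q} {p : List Q} {i i' : Γ}
    (hmem : y :: p ∈ orbitOf (deltaStar δ ρ) u)
    (hδ : δ i y = δ i' z) (hρ : ρ y i = ρ z i') :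
    z :: p ∈ orbitOf (deltaStar δ ρ) u := by
  have hbij := orbit_compReversible (ρ := ρ) hRev u i'
  have h1 : deltaStar δ ρ i (y :: p) ∈ orbitOf (deltaStar δ ρ) u :=
    orbit_mapsTo _ u i hmem
  obtain ⟨W, hW, hWe⟩ := hbij.surjOn h1
  have heq : deltaStar δ ρ i' (z :: p) = deltaStar δ ρ i (y :: p) := by
    simp only [deltaStar]
    rw [← hδ, ← hρ]
  have : W = z :: p := deltaStar_injective hRev i' (hWe.trans heq.symm)
  rwa [this] at hW

lemma applyWord_deltaStar_cons (δ : Γ → Q → Q) (ρ : Q → Γ → Γ)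
    (s : List Γ) (x : Q) (v : List Q) :
    applyWord (deltaStar δ ρ) s (x :: v)
      = applyWord δ s x :: applyWord (deltaStar δ ρ) (rhoStar δ ρ x s) v := by
  induction s generalizing x v with
  | nil => rfl
  | cons i s ih => simp [applyWord, deltaStar, rhoStar, ih]

lemma rhoLetter_bijective {ρ : Q → Γ → Γ} (hInv : MInvertible ρ) (u : List Q) :
    Function.Bijective (rhoLetter ρ u) := by
  induction u with
  | nil => exact Function.bijective_id
  | cons x u ih =>
    have : rhoLetter ρ (x :: u) = (rhoLetter ρ u) ∘ (ρ x) := rfl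
    rw [this]
    exact ih.comp (hInv x)

end Aux

/-- If a Mealy automaton is reversible and none of its
connected components is coreversible, then for every `n ≥ 1` every connected
component of the power `A^n` is reversible and non-coreversible; if moreover
the automaton is invertible, then these components are also invertible. -/
theorem power_component_reversible_noncoreversible
    {Q Γ : Type*} [Fintype Q] [Fintype Γ] [Nonempty Q] [Nonempty Γ]
    (δ : Γ → Q → Q) (ρ : Q → Γ → Γ)
    (hRev : MReversible δ)
    (hNoCor : ∀ x : Q, ¬ CompCoreversible δ ρ (orbitOf δ x)) :
    ∀ n : ℕ, 1 ≤ n → ∀ u : List Q, u.length = n →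
      (CompReversible (deltaStar δ ρ) (orbitOf (deltaStar δ ρ) u) ∧
        ¬ CompCoreversible (deltaStar δ ρ) (rhoLetter ρ) (orbitOf (deltaStar δ ρ) u)) ∧
      (MInvertible ρ → CompInvertible (rhoLetter ρ) (orbitOf (deltaStar δ ρ) u)) := by
  intro n hn u hu
  refine ⟨⟨orbit_compReversible hRev u, ?_⟩, fun hInv v _ => rhoLetter_bijective hInv v⟩
  cases u with
  | nil => simp at hu; omega
  | cons x v =>
    intro hcor
    have hx := hNoCor x
    rw [CompCoreversible] at hx
    push_neg at hx
    obtain ⟨y, hy, z, hz, i, i', hδ, hρ, hne⟩ := hx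
    obtain ⟨a, ha⟩ := hy
    have hmem : y :: applyWord (deltaStar δ ρ) (rhoStar δ ρ x a) v
        ∈ orbitOf (deltaStar δ ρ) (x :: v) :=
      ⟨a, by rw [applyWord_deltaStar_cons, ha]⟩
    set p := applyWord (deltaStar δ ρ) (rhoStar δ ρ x a) v with hp
    have hmem' : z :: p ∈ orbitOf (deltaStar δ ρ) (x :: v) :=
      orbit_cons_of_rel hRev _ hmem hδ hρ
    have hδ' : deltaStar δ ρ i (y :: p) = deltaStar δ ρ i' (z :: p) := by
      simp only [deltaStar]
      rw [hδ, hρ]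
    have hρ' : rhoLetter ρ (y :: p) i = rhoLetter ρ (z :: p) i' := by
      simp only [rhoLetter]
      rw [hρ]
    have := hcor _ hmem _ hmem' i i' hδ' hρ'
    exact hne (List.cons.injEq .. ▸ this).1
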